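/- For every word v ∈ A* and all letters a_1, …, a_k ∈ A: (a_1⋯a_k) ⧢_q v = Σ q^{Σ_{i=0}^k (k−i)·|v_i|} · (v_0 a_1 v_1 a_2 ⋯ v_{k-1} a_k v_k), where the sum ranges over all factorizations v = v_0 v_1 ⋯ v_k with v_0, …, v_k ∈ A*. -/

import Mathlib

noncomputable def qShuffleAux {A : Type*} [DecidableEq A] :
    List A → List A → (List A →₀ Polynomial ℕ)
  | [], v => Finsupp.single v 1
  | a :: u, [] => Finsupp.single (a :: u) 1
  | a :: u, b :: v =>
      (Polynomial.X : Polynomial ℕ) ^ (v.length + 1) •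
          Finsupp.mapDomain (a :: ·) (qShuffleAux u (b :: v)) +
        Finsupp.mapDomain (b :: ·) (qShuffleAux (a :: u) v)

/-- The `q`-shuffle `u ⧢_q v` of two words. -/
noncomputable def qShuffle {A : Type*} [DecidableEq A] (u v : List A) :
    List A →₀ Polynomial ℕ :=
  Finsupp.mapDomain List.reverse (qShuffleAux u.reverse v.reverse)

/-- `glue [v₀, v₁, …, v_k] [a₁, …, a_k] = v₀ a₁ v₁ a₂ ⋯ v_{k-1} a_k v_k`. -/
def glue {A : Type*} : List (List A) → List A → List A
  | [], as => as
  | v0 :: vs, [] => v0 ++ glue vs []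
  | v0 :: vs, a :: as => v0 ++ a :: glue vs as

section Helpers

variable {A : Type*} [DecidableEq A]

/-- The set of factorizations of `v` into `n` (possibly empty) parts. -/
def Facts (n : ℕ) (v : List A) : Set (List (List A)) :=
  {vs | vs.length = n ∧ vs.flatten = v}

lemma facts_finite : ∀ (n : ℕ) (v : List A), (Facts n v).Finite
  | 0, v => by
      apply Set.Finite.subset (Set.finite_singleton ([] : List (List A)))
      rintro vs ⟨h1, -⟩
      simpa [List.length_eq_zero_iff] using h1
  | (n + 1), v => by
      apply Set.Finite.subset (Set.Finite.biUnion (Finset.range (v.length + 1)).finite_toSet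
        (fun i _ => ((facts_finite n (v.drop i)).image (v.take i :: ·))))
      rintro vs ⟨h1, h2⟩
      cases vs with
      | nil => simp at h1
      | cons w rest =>
          have hv : v = w ++ rest.flatten := by simpa using h2.symm
          have hwl : w.length ≤ v.length := by simp [hv]
          exact Set.mem_biUnion
            (show w.length ∈ ((Finset.range (v.length + 1) : Finset ℕ) : Set ℕ) from by
              simpa using Nat.lt_succ_of_le hwl)
            ⟨rest, ⟨by simpa using h1, by rw [hv, List.drop_left]⟩, by rw [hv, List.take_left]⟩

lemma facts_one (v : List A) : Facts 1 v = {[v]} := by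
  ext vs
  constructor
  · rintro ⟨h1, h2⟩
    obtain ⟨w, rfl⟩ := List.length_eq_one_iff.mp h1
    simp_all [Facts]
  · rintro rfl
    exact ⟨rfl, by simp⟩

lemma facts_nil (n : ℕ) : Facts (n + 1) ([] : List A) = {List.replicate (n + 1) []} := by
  ext vs
  constructor
  · rintro ⟨h1, h2⟩
    have := List.flatten_eq_nil_iff.mp h2
    exact List.eq_replicate_iff.mpr ⟨h1, this⟩
  · rintro rfl
    exact ⟨by simp, by simp [List.flatten_eq_nil_iff]⟩

lemma facts_cons (n : ℕ) (b : A) (v : List A) :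
    Facts (n + 1) (b :: v) =
      ((([] : List A)) :: ·) '' Facts n (b :: v) ∪
        (fun ws => (b :: ws.headI) :: ws.tail) '' Facts (n + 1) v := by
  ext vs
  simp only [Facts, Set.mem_setOf_eq, Set.mem_union, Set.mem_image]
  constructor
  · rintro ⟨hl, hf⟩
    cases vs with
    | nil => simp at hl
    | cons w rest =>
        cases w with
        | nil =>
            left
            exact ⟨rest, ⟨by simpa using hl, by simpa using hf⟩, rfl⟩
        | cons c w' =>
            right
            have hcb : c = b ∧ w' ++ rest.flatten = v := by simpa using hf
            refine ⟨w' :: rest, ⟨by simpa using hl, by simpa using hcb.2⟩, ?_⟩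
            simp [hcb.1]
  · rintro (⟨ws, ⟨hl, hf⟩, rfl⟩ | ⟨ws, ⟨hl, hf⟩, rfl⟩)
    · exact ⟨by simp [hl], by simpa using hf⟩
    · cases ws with
      | nil => simp at hl
      | cons w rest =>
          refine ⟨by simpa using hl, ?_⟩
          simpa using hf

lemma facts_cons_disjoint (n m : ℕ) (b : A) (v w : List A) :
    Disjoint (((([] : List A)) :: ·) '' Facts n w)
      ((fun ws => (b :: ws.headI) :: ws.tail) '' Facts m v) := by
  rw [Set.disjoint_left]
  rintro x ⟨ws, -, rfl⟩ ⟨ws', -, h⟩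
  simp at h

lemma facts_cons_injOn (n : ℕ) (b : A) (v : List A) :
    Set.InjOn (fun ws => (b :: ws.headI) :: ws.tail) (Facts (n + 1) v) := by
  rintro x ⟨hx, -⟩ y ⟨hy, -⟩ h
  cases x with
  | nil => simp at hx
  | cons x0 xt =>
      cases y with
      | nil => simp at hy
      | cons y0 yt => simpa using h

lemma sum_getD_length : ∀ ws : List (List A),
    ∑ i ∈ Finset.range ws.length, (ws.getD i []).length = ws.flatten.length
  | [] => by simp
  | w :: ws => by
      rw [List.length_cons, Finset.sum_range_succ']
      simp only [List.getD_cons_succ, List.getD_cons_zero]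
      rw [sum_getD_length ws]
      simp [Nat.add_comm]

lemma getD_replicate_nil (n i : ℕ) : (List.replicate n ([] : List A)).getD i [] = [] := by
  rcases lt_or_ge i n with h | h
  · rw [List.getD_eq_getElem _ _ (by simpa using h)]
    simp
  · rw [List.getD_eq_default]
    simpa using h

lemma glue_replicate : ∀ u : List A, glue (List.replicate (u.length + 1) []) u = u
  | [] => by simp [glue]
  | a :: u => by
      show glue ([] :: List.replicate (u.length + 1) []) (a :: u) = a :: u
      rw [glue]
      simp [glue_replicate u]

lemma glue_append : ∀ (ys : List A) (xs : List (List A)) (x : List A) (a : A),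
    xs.length = ys.length + 1 →
    glue (xs ++ [x]) (ys ++ [a]) = glue xs ys ++ a :: x
  | [], xs, x, a, h => by
      obtain ⟨z, rfl⟩ := List.length_eq_one_iff.mp h
      simp [glue]
  | c :: ys, xs, x, a, h => by
      cases xs with
      | nil => simp at h
      | cons z xs =>
          have hlen : xs.length = ys.length + 1 := by simpa using h
          show glue (z :: (xs ++ [x])) ((c :: (ys ++ [a]))) = (z ++ c :: glue xs ys) ++ a :: x
          rw [glue, glue_append ys xs x a hlen]
          simp

lemma glue_reverse : ∀ (us : List A) (vs : List (List A)), vs.length = us.length + 1 →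
    (glue vs us).reverse = glue ((vs.map List.reverse).reverse) us.reverse
  | [], vs, h => by
      obtain ⟨w, rfl⟩ := List.length_eq_one_iff.mp h
      simp [glue]
  | a :: us, vs, h => by
      cases vs with
      | nil => simp at h
      | cons w vs =>
          have hlen : vs.length = us.length + 1 := by simpa using h
          have hlen' : ((vs.map List.reverse).reverse).length = us.reverse.length + 1 := by
            simpa using hlen
          show (w ++ a :: glue vs us).reverse =
            glue (((w :: vs).map List.reverse).reverse) ((a :: us).reverse)
          rw [List.map_cons, List.reverse_cons, List.reverse_cons,
            glue_append _ _ _ _ hlen', ← glue_reverse us vs hlen]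
          simp

lemma mapDomain_finsum_mem {ι α β M : Type*} [AddCommMonoid M] (f : α → β) {s : Set ι}
    (hs : s.Finite) (g : ι → α →₀ M) :
    Finsupp.mapDomain f (∑ᶠ i ∈ s, g i) = ∑ᶠ i ∈ s, Finsupp.mapDomain f (g i) := by
  rw [finsum_mem_eq_finite_toFinset_sum _ hs, finsum_mem_eq_finite_toFinset_sum _ hs]
  exact map_sum (Finsupp.mapDomain.addMonoidHom f) g hs.toFinset

lemma smul_finsum_mem' {ι R M : Type*} [Monoid R] [AddCommMonoid M] [DistribMulAction R M]
    (r : R) {s : Set ι} (hs : s.Finite) (g : ι → M) :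
    r • (∑ᶠ i ∈ s, g i) = ∑ᶠ i ∈ s, r • g i := by
  rw [finsum_mem_eq_finite_toFinset_sum _ hs, finsum_mem_eq_finite_toFinset_sum _ hs,
    Finset.smul_sum]

theorem qShuffleAux_eq (u v : List A) :
    qShuffleAux u v =
      ∑ᶠ vs ∈ Facts (u.length + 1) v,
        Finsupp.single (glue vs u)
          ((Polynomial.X : Polynomial ℕ) ^
            ∑ i ∈ Finset.range (u.length + 1), i * (vs.getD i []).length) := by
  induction u, v using qShuffleAux.induct with
  | case1 v =>
      rw [show ([] : List A).length + 1 = 1 from rfl, facts_one, finsum_mem_singleton]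
      simp [qShuffleAux, glue, Finset.sum_range_one]
  | case2 a u =>
      rw [facts_nil, finsum_mem_singleton]
      have h1 : glue (List.replicate (u.length + 1 + 1) ([] : List A)) (a :: u) = a :: u :=
        glue_replicate (a :: u)
      simp [qShuffleAux, h1, getD_replicate_nil]
  | case3 a u b v ih1 ih2 =>
      have h1 := facts_finite (u.length + 1) (b :: v)
      have h2 := facts_finite ((a :: u).length + 1) v
      rw [qShuffleAux, ih1, ih2, mapDomain_finsum_mem _ h1, smul_finsum_mem' _ h1,
        mapDomain_finsum_mem _ h2,
        show (a :: u).length + 1 = ((a :: u).length) + 1 from rfl,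
        show (a :: u).length = u.length + 1 from rfl,
        facts_cons (u.length + 1) b v,
        finsum_mem_union (facts_cons_disjoint _ _ _ _ _) (h1.image _)
          ((facts_finite _ _).image _),
        finsum_mem_image (fun x _ y _ h => by simpa using h),
        finsum_mem_image (facts_cons_injOn _ b v)]
      congr 1
      · apply finsum_mem_congr rfl
        intro ws hws
        obtain ⟨hl, hf⟩ := hws
        simp only [Finsupp.mapDomain_single, Finsupp.smul_single, smul_eq_mul, ← pow_add]
        have hg : glue (([] : List A) :: ws) (a :: u) = a :: glue ws u := by
          rw [glue]; simp
        have he : ∑ i ∈ Finset.range (u.length + 1 + 1),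
              i * ((([] : List A) :: ws).getD i []).length
            = v.length + 1 + ∑ i ∈ Finset.range (u.length + 1), i * (ws.getD i []).length := by
          rw [Finset.sum_range_succ'
            (fun i => i * ((([] : List A) :: ws).getD i []).length) (u.length + 1)]
          simp only [List.getD_cons_succ, List.getD_cons_zero, List.length_nil, Nat.mul_zero,
            Nat.add_zero, Nat.add_mul, Nat.one_mul, Nat.zero_mul]
          rw [Finset.sum_add_distrib]
          have hsum : ∑ i ∈ Finset.range (u.length + 1), (ws.getD i []).length
              = v.length + 1 := by
            rw [← hl, sum_getD_length ws, hf]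
            simp
          omega
        rw [hg, he]
      · apply finsum_mem_congr rfl
        intro ws hws
        obtain ⟨hl, hf⟩ := hws
        cases ws with
        | nil => simp at hl
        | cons w rest =>
            simp only [Finsupp.mapDomain_single, List.headI_cons, List.tail_cons]
            have hg : glue ((b :: w) :: rest) (a :: u) = b :: glue (w :: rest) (a :: u) := by
              rw [glue, glue]; simp
            have he : ∀ w' : List A,
                ∑ i ∈ Finset.range (u.length + 1 + 1), i * ((w' :: rest).getD i []).length
                = ∑ i ∈ Finset.range (u.length + 1), (i + 1) * (rest.getD i []).length := by
              intro w'
              rw [Finset.sum_range_succ']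
              simp
            rw [hg, he w, ← he (b :: w)]

lemma phi_phi (ws : List (List A)) :
    ((((ws.map List.reverse).reverse).map List.reverse).reverse) = ws := by
  rw [← List.map_reverse, List.reverse_reverse, List.map_map]
  simp

lemma flatten_phi (ws : List (List A)) :
    ((ws.map List.reverse).reverse).flatten = ws.flatten.reverse :=
  List.reverse_flatten.symm

lemma facts_reverse (n : ℕ) (v : List A) :
    Facts n v.reverse = (fun ws : List (List A) => (ws.map List.reverse).reverse) '' Facts n v := by
  ext vs
  constructor
  · rintro ⟨hl, hf⟩
    refine ⟨(vs.map List.reverse).reverse, ⟨by simpa using hl, ?_⟩, phi_phi vs⟩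
    rw [flatten_phi, hf, List.reverse_reverse]
  · rintro ⟨ws, ⟨hl, hf⟩, rfl⟩
    refine ⟨by simpa using hl, ?_⟩
    rw [flatten_phi, hf]

end Helpers

/-- `(a₁⋯a_k) ⧢_q v = Σ q^{Σ_{i=0}^k (k-i)·|vᵢ|} · (v₀ a₁ v₁ a₂ ⋯ v_{k-1} a_k v_k)`,
the sum ranging over all factorizations `v = v₀ v₁ ⋯ v_k` (with `k = |u|`). -/
theorem qShuffle_eq_sum_factorizations_left (A : Type*) [Fintype A] [DecidableEq A]
    (u v : List A) :
    qShuffle u v =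
      ∑ᶠ vs ∈ {vs : List (List A) | vs.length = u.length + 1 ∧ vs.flatten = v},
        Finsupp.single (glue vs u)
          ((Polynomial.X : Polynomial ℕ) ^
            ∑ i ∈ Finset.range vs.length, (u.length - i) * (vs.getD i []).length) := by
  show qShuffle u v = ∑ᶠ vs ∈ Facts (u.length + 1) v, _
  rw [qShuffle, qShuffleAux_eq, show u.reverse.length = u.length from by simp,
    mapDomain_finsum_mem _ (facts_finite _ _), facts_reverse,
    finsum_mem_image (Function.Injective.injOn (fun x y h => by
      have := congrArg (fun l : List (List A) => (l.map List.reverse).reverse) h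
      simpa only [phi_phi] using this))]
  apply finsum_mem_congr rfl
  intro ws hws
  obtain ⟨hl, hf⟩ := hws
  rw [Finsupp.mapDomain_single]
  have hlen : ((ws.map List.reverse).reverse).length = u.reverse.length + 1 := by
    simpa using hl
  have hg : (glue ((ws.map List.reverse).reverse) u.reverse).reverse = glue ws u := by
    rw [glue_reverse u.reverse _ hlen, phi_phi, List.reverse_reverse]
  have hgetD : ∀ i < u.length + 1,
      (((ws.map List.reverse).reverse).getD i []).length
        = (ws.getD (u.length - i) []).length := by
    intro i hi
    have h1 : i < ((ws.map List.reverse).reverse).length := by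
      rw [hlen]; simpa using hi
    have h2 : u.length - i < ws.length := by omega
    rw [List.getD_eq_getElem _ _ h1, List.getD_eq_getElem _ _ h2, List.getElem_reverse,
      List.getElem_map]
    simp only [List.length_reverse, List.length_map, List.length_reverse] at *
    congr 2
    omega
  have he : ∑ i ∈ Finset.range (u.length + 1),
        i * (((ws.map List.reverse).reverse).getD i []).length
      = ∑ i ∈ Finset.range ws.length, (u.length - i) * (ws.getD i []).length := by
    rw [hl]
    calc ∑ i ∈ Finset.range (u.length + 1),
          i * (((ws.map List.reverse).reverse).getD i []).length
        = ∑ i ∈ Finset.range (u.length + 1), i * (ws.getD (u.length - i) []).length := by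
          apply Finset.sum_congr rfl
          intro i hi
          rw [hgetD i (Finset.mem_range.mp hi)]
      _ = ∑ i ∈ Finset.range (u.length + 1), (u.length - i) * (ws.getD i []).length := by
          have := Finset.sum_range_reflect
            (fun j => (u.length - j) * (ws.getD j []).length) (u.length + 1)
          rw [← this]
          apply Finset.sum_congr rfl
          intro i hi
          have hi' := Finset.mem_range.mp hi
          congr 1
          omega
  rw [hg, he]
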